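/- Consider a Bayesian game with submodular social welfare in which the prior ρ is independent (a product distribution). Then STR ≥ (1 − 1/e) · OPT, i.e., max_{s ∈ S} E_{θ∼ρ}[SW(s(θ))] ≥ (1 − 1/e) · E_{θ∼ρ}[max_{a ∈ A^θ} SW(a)] (equivalently, the strategy representability gap is at least 1 − 1/e). -/

import Mathlib

open Finset

/-- A set function is monotone if it is nondecreasing with respect to inclusion. -/
def MonotoneFn {α : Type*} (f : Finset α → ℝ) : Prop :=
  ∀ ⦃X Y : Finset α⦄, X ⊆ Y → f X ≤ f Y

/-- A set function is submodular if marginal gains diminish as the set grows. -/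
def SubmodularFn {α : Type*} [DecidableEq α] (f : Finset α → ℝ) : Prop :=
  ∀ ⦃X Y : Finset α⦄, X ⊆ Y → ∀ u, u ∉ Y → f (insert u Y) - f Y ≤ f (insert u X) - f X

/-- `OPT = E_{θ∼ρ}[max_{a ∈ A^θ} SW a]`, where `SW a = f {a_1, …, a_n}`. -/
noncomputable def gOPT {n : ℕ} {Θ : Fin n → Type*} [∀ i, Fintype (Θ i)] [∀ i, DecidableEq (Θ i)]
    {E : Type*} [Fintype E] [DecidableEq E]
    (Act : ∀ i, Θ i → Finset E) (hAne : ∀ i t, (Act i t).Nonempty)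
    (ρ : (∀ i, Θ i) → ℝ) (f : Finset E → ℝ) : ℝ :=
  ∑ θ : ∀ i, Θ i, ρ θ *
    (Fintype.piFinset fun i => Act i (θ i)).sup'
      (Fintype.piFinset_nonempty.mpr fun i => hAne i (θ i))
      (fun a => f (Finset.univ.image a))

/-- `STR = max_{s ∈ S} E_{θ∼ρ}[SW (s θ)]`, the maximum over strategy profiles. -/
noncomputable def gSTR {n : ℕ} {Θ : Fin n → Type*} [∀ i, Fintype (Θ i)] [∀ i, DecidableEq (Θ i)]
    {E : Type*} [Fintype E] [DecidableEq E]
    (Act : ∀ i, Θ i → Finset E) (hAne : ∀ i t, (Act i t).Nonempty)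
    (ρ : (∀ i, Θ i) → ℝ) (f : Finset E → ℝ) : ℝ :=
  (Fintype.piFinset fun i => Fintype.piFinset fun t : Θ i => Act i t).sup'
    (Fintype.piFinset_nonempty.mpr fun i => Fintype.piFinset_nonempty.mpr fun t => hAne i t)
    (fun s => ∑ θ : ∀ i, Θ i, ρ θ * f (Finset.univ.image fun i => s i (θ i)))

section CorrGapProofs
set_option linter.unusedSectionVars false

namespace CorrGapAux

variable {E : Type*} [DecidableEq E]

lemma marg_nonneg {f : Finset E → ℝ} (hmono : MonotoneFn f) (X : Finset E) (e : E) :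
    0 ≤ f (insert e X) - f X :=
  sub_nonneg.2 (hmono (Finset.subset_insert _ _))

lemma marg_anti {f : Finset E → ℝ} (hmono : MonotoneFn f) (hsub : SubmodularFn f)
    {X Y : Finset E} (hXY : X ⊆ Y) (e : E) :
    f (insert e Y) - f Y ≤ f (insert e X) - f X := by
  by_cases h : e ∈ Y
  · rw [Finset.insert_eq_self.2 h, sub_self]
    exact marg_nonneg hmono X e
  · exact hsub hXY e h

lemma telescope {ι : Type*} [DecidableEq ι] {f : Finset E → ℝ}
    (hmono : MonotoneFn f) (hsub : SubmodularFn f)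
    (X : Finset E) (a : ι → E) (s : Finset ι) :
    f (X ∪ s.image a) - f X ≤ ∑ i ∈ s, (f (insert (a i) X) - f X) := by
  induction s using Finset.induction_on with
  | empty => simp
  | @insert j s hj ih =>
    rw [Finset.image_insert, Finset.union_insert, Finset.sum_insert hj]
    have h1 : f (insert (a j) (X ∪ s.image a)) - f (X ∪ s.image a)
        ≤ f (insert (a j) X) - f X :=
      marg_anti hmono hsub Finset.subset_union_left (a j)
    linarith


variable {ι : Type*} [DecidableEq ι]

noncomputable def P (s : Finset ι) (g : Finset ι → ℝ) (t : ℝ) : ℝ :=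
  ∑ R ∈ s.powerset, t ^ R.card * (1 - t) ^ (s.card - R.card) * g R

noncomputable def DP (s : Finset ι) (g : Finset ι → ℝ) (t : ℝ) : ℝ :=
  ∑ i ∈ s, ∑ R ∈ (s.erase i).powerset,
    t ^ R.card * (1 - t) ^ (s.card - 1 - R.card) * (g (insert i R) - g R)

lemma P_insert {a : ι} {s : Finset ι} (h : a ∉ s) (g : Finset ι → ℝ) (t : ℝ) :
    P (insert a s) g t = t * P s (fun R => g (insert a R)) t + (1 - t) * P s g t := by
  unfold P
  rw [Finset.sum_powerset_insert h, Finset.mul_sum, Finset.mul_sum, add_comm]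
  congr 1
  · refine Finset.sum_congr rfl fun R hR => ?_
    have hRs : R ⊆ s := Finset.mem_powerset.1 hR
    have haR : a ∉ R := fun hx => h (hRs hx)
    have hcard : R.card ≤ s.card := Finset.card_le_card hRs
    rw [Finset.card_insert_of_notMem h, Finset.card_insert_of_notMem haR]
    have e : s.card + 1 - (R.card + 1) = s.card - R.card := by omega
    rw [e, pow_succ]
    ring
  · refine Finset.sum_congr rfl fun R hR => ?_
    have hRs : R ⊆ s := Finset.mem_powerset.1 hR
    have hcard : R.card ≤ s.card := Finset.card_le_card hRs
    rw [Finset.card_insert_of_notMem h]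
    have e : s.card + 1 - R.card = (s.card - R.card) + 1 := by omega
    rw [e, pow_succ]
    ring

lemma P_const (s : Finset ι) (t : ℝ) : P s (fun _ => (1:ℝ)) t = 1 := by
  induction s using Finset.induction_on with
  | empty => simp [P]
  | @insert a s ha ih =>
    rw [P_insert ha]
    show t * P s (fun _ => (1:ℝ)) t + (1 - t) * P s (fun _ => (1:ℝ)) t = 1
    rw [ih]; ring

lemma P_zero (s : Finset ι) (g : Finset ι → ℝ) : P s g 0 = g ∅ := by
  unfold P
  rw [Finset.sum_eq_single ∅]
  · simp
  · intro R hR hRne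
    have : R.card ≠ 0 := by
      simpa [Finset.card_eq_zero] using hRne
    rw [zero_pow this]; ring
  · intro h; exact absurd (Finset.empty_mem_powerset s) h

lemma P_one (s : Finset ι) (g : Finset ι → ℝ) : P s g 1 = g s := by
  unfold P
  rw [Finset.sum_eq_single s]
  · simp
  · intro R hR hRne
    have hRs : R ⊆ s := Finset.mem_powerset.1 hR
    have : s.card - R.card ≠ 0 := by
      have : R.card < s.card := Finset.card_lt_card (lt_of_le_of_ne hRs (fun h => hRne h))
      omega
    rw [show (1:ℝ) - 1 = 0 from by ring, zero_pow this]; ring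
  · intro h; exact absurd (Finset.mem_powerset_self s) h

lemma DP_insert {a : ι} {s : Finset ι} (ha : a ∉ s) (g : Finset ι → ℝ) (t : ℝ) :
    DP (insert a s) g t
        = (P s (fun R => g (insert a R)) t - P s g t)
          + ((1 - t) * DP s g t + t * DP s (fun R => g (insert a R)) t) := by
  unfold DP
  rw [Finset.sum_insert ha]
  have hterm_a : ∑ R ∈ ((insert a s).erase a).powerset,
      t ^ R.card * (1 - t) ^ ((insert a s).card - 1 - R.card) * (g (insert a R) - g R)
      = P s (fun R => g (insert a R)) t - P s g t := by
    rw [Finset.erase_insert ha, Finset.card_insert_of_notMem ha]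
    unfold P
    rw [← Finset.sum_sub_distrib]
    refine Finset.sum_congr rfl fun R hR => ?_
    have e : s.card + 1 - 1 - R.card = s.card - R.card := by omega
    rw [e]; ring
  rw [hterm_a]
  have hstep : ∀ i ∈ s,
      ∑ R ∈ ((insert a s).erase i).powerset,
        t ^ R.card * (1 - t) ^ ((insert a s).card - 1 - R.card) * (g (insert i R) - g R)
      = (1 - t) * (∑ R ∈ (s.erase i).powerset,
            t ^ R.card * (1 - t) ^ (s.card - 1 - R.card) * (g (insert i R) - g R))
        + t * (∑ R ∈ (s.erase i).powerset,
            t ^ R.card * (1 - t) ^ (s.card - 1 - R.card) *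
              ((fun R => g (insert a R)) (insert i R) - (fun R => g (insert a R)) R)) := by
    intro i hi
    have hai : a ≠ i := fun h => ha (h ▸ hi)
    have h1 : (insert a s).erase i = insert a (s.erase i) :=
      Finset.erase_insert_of_ne hai
    have ha' : a ∉ s.erase i := fun h => ha (Finset.mem_of_mem_erase h)
    rw [h1, Finset.sum_powerset_insert ha', Finset.card_insert_of_notMem ha,
      Finset.mul_sum, Finset.mul_sum]
    have hsc : 1 ≤ s.card := Finset.card_pos.2 ⟨i, hi⟩
    congr 1
    · refine Finset.sum_congr rfl fun R hR => ?_
      have hRs : R ⊆ s.erase i := Finset.mem_powerset.1 hR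
      have hrc : R.card ≤ s.card - 1 := by
        simpa [Finset.card_erase_of_mem hi] using Finset.card_le_card hRs
      have e : s.card + 1 - 1 - R.card = (s.card - 1 - R.card) + 1 := by omega
      rw [e, pow_succ]; ring
    · refine Finset.sum_congr rfl fun R hR => ?_
      have hRs : R ⊆ s.erase i := Finset.mem_powerset.1 hR
      have haR : a ∉ R := fun h => ha' (hRs h)
      have hrc : R.card ≤ s.card - 1 := by
        simpa [Finset.card_erase_of_mem hi] using Finset.card_le_card hRs
      rw [Finset.card_insert_of_notMem haR]
      have e : s.card + 1 - 1 - (R.card + 1) = s.card - 1 - R.card := by omega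
      rw [e, pow_succ, Finset.insert_comm]
      try ring
  rw [Finset.sum_congr rfl hstep, Finset.sum_add_distrib, ← Finset.mul_sum, ← Finset.mul_sum]
  try ring

lemma hasDerivAt_P (s : Finset ι) (g : Finset ι → ℝ) (t : ℝ) :
    HasDerivAt (fun u => P s g u) (DP s g t) t := by
  induction s using Finset.induction_on generalizing g with
  | empty =>
    have h : (fun u => P (∅ : Finset ι) g u) = fun _ => g ∅ := by
      funext u; simp [P]
    rw [h, show DP (∅ : Finset ι) g t = 0 from by simp [DP]]
    exact hasDerivAt_const t (g ∅)
  | @insert a s ha ih =>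
    have hfun : (fun u => P (insert a s) g u)
        = fun u => u * P s (fun R => g (insert a R)) u + (1 - u) * P s g u := by
      funext u; rw [P_insert ha]
    rw [hfun]
    have h1 : HasDerivAt (fun u => u * P s (fun R => g (insert a R)) u)
        (1 * P s (fun R => g (insert a R)) t + t * DP s (fun R => g (insert a R)) t) t :=
      (hasDerivAt_id t).mul (ih _)
    have h2 : HasDerivAt (fun u => (1 - u) * P s g u)
        ((0 - 1) * P s g t + (1 - t) * DP s g t) t :=
      (((hasDerivAt_const t (1:ℝ)).sub (hasDerivAt_id t))).mul (ih _)
    have hsum := h1.add h2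
    refine hsum.congr_deriv ?_
    -- combinatorial identity for DP (insert a s)
    rw [DP_insert ha]; ring

end CorrGapAux

namespace CorrGapAux

lemma rdrop {ι : Type*} [DecidableEq ι] {s : Finset ι} {i : ι} (hi : i ∈ s)
    (h : Finset ι → ℝ) (t : ℝ) :
    ∑ R ∈ s.powerset, t ^ R.card * (1 - t) ^ (s.card - R.card) * h (R.erase i)
      = ∑ R ∈ (s.erase i).powerset,
          t ^ R.card * (1 - t) ^ (s.card - 1 - R.card) * h R := by
  have hins : s = insert i (s.erase i) := (Finset.insert_erase hi).symm
  have hi' : i ∉ s.erase i := Finset.notMem_erase i s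
  have hcard : s.card = (s.erase i).card + 1 := by
    rw [Finset.card_erase_of_mem hi]
    have : 1 ≤ s.card := Finset.card_pos.2 ⟨i, hi⟩
    omega
  conv_lhs => rw [hins]
  rw [Finset.sum_powerset_insert hi']
  have h1 : ∀ R ∈ (s.erase i).powerset,
      t ^ R.card * (1 - t) ^ ((insert i (s.erase i)).card - R.card) * h (R.erase i)
      = (1 - t) * (t ^ R.card * (1 - t) ^ (s.card - 1 - R.card) * h R) := by
    intro R hR
    have hRs : R ⊆ s.erase i := Finset.mem_powerset.1 hR
    have hiR : i ∉ R := fun hx => hi' (hRs hx)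
    have hrc : R.card ≤ (s.erase i).card := Finset.card_le_card hRs
    rw [Finset.erase_eq_of_notMem hiR, Finset.card_insert_of_notMem hi']
    have e : (s.erase i).card + 1 - R.card = (s.card - 1 - R.card) + 1 := by omega
    rw [e, pow_succ]; ring
  have h2 : ∀ R ∈ (s.erase i).powerset,
      t ^ (insert i R).card * (1 - t) ^ ((insert i (s.erase i)).card - (insert i R).card)
          * h ((insert i R).erase i)
      = t * (t ^ R.card * (1 - t) ^ (s.card - 1 - R.card) * h R) := by
    intro R hR
    have hRs : R ⊆ s.erase i := Finset.mem_powerset.1 hR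
    have hiR : i ∉ R := fun hx => hi' (hRs hx)
    have hrc : R.card ≤ (s.erase i).card := Finset.card_le_card hRs
    rw [Finset.erase_insert hiR, Finset.card_insert_of_notMem hi',
      Finset.card_insert_of_notMem hiR]
    have e : (s.erase i).card + 1 - (R.card + 1) = s.card - 1 - R.card := by omega
    rw [e, pow_succ]; ring
  rw [Finset.sum_congr rfl h1, Finset.sum_congr rfl h2, ← Finset.mul_sum, ← Finset.mul_sum]
  ring

lemma avg_le {α : Type*} [Fintype α] (w g : α → ℝ) (M : ℝ) (hw0 : ∀ a, 0 ≤ w a)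
    (hw1 : ∑ a, w a = 1) (hg : ∀ a, g a ≤ M) : ∑ a, w a * g a ≤ M := by
  calc ∑ a, w a * g a ≤ ∑ a, w a * M :=
        Finset.sum_le_sum fun a _ => mul_le_mul_of_nonneg_left (hg a) (hw0 a)
    _ = M := by rw [← Finset.sum_mul, hw1, one_mul]

lemma sum_prod_pi_eq_one {ι : Type*} [Fintype ι] [DecidableEq ι] {β : ι → Type*}
    [∀ i, Fintype (β i)] (w : ∀ i, β i → ℝ) (hw1 : ∀ i, ∑ b, w i b = 1) :
    ∑ T : ∀ i, β i, ∏ i, w i (T i) = 1 := by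
  rw [← Fintype.prod_sum w]
  simp [hw1]

lemma split {ι β : Type*} [Fintype ι] [DecidableEq ι] [Fintype β]
    (w : β → ℝ) (hw1 : ∑ b, w b = 1) (i₀ : ι) (Φ : (ι → β) → β → ℝ)
    (hΦ : ∀ T c b, Φ (Function.update T i₀ c) b = Φ T b) :
    ∑ T : ι → β, (∏ j, w (T j)) * Φ T (T i₀)
      = ∑ T : ι → β, (∏ j, w (T j)) * ∑ b, w b * Φ T b := by
  classical
  have hinv : Function.Involutive
      (fun p : β × (ι → β) => (p.2 i₀, Function.update p.2 i₀ p.1)) := by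
    rintro ⟨c, T⟩
    simp
  set G : β × (ι → β) → ℝ :=
    fun p => w p.1 * ((∏ j, w (p.2 j)) * Φ p.2 (p.2 i₀)) with hG
  have hsum := Equiv.sum_comp (hinv.toPerm _) G
  have hL : ∀ p : β × (ι → β), G ((hinv.toPerm _) p)
      = (∏ j, w (p.2 j)) * (w p.1 * Φ p.2 p.1) := by
    rintro ⟨c, T⟩
    show w (T i₀) * ((∏ j, w (Function.update T i₀ c j))
        * Φ (Function.update T i₀ c) (Function.update T i₀ c i₀))
        = (∏ j, w (T j)) * (w c * Φ T c)
    have hupd : (fun j => w (Function.update T i₀ c j))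
        = Function.update (fun j => w (T j)) i₀ (w c) := by
      funext j
      by_cases hj : j = i₀
      · subst hj; simp
      · simp [Function.update_of_ne hj]
    have hprod : (∏ j, w (Function.update T i₀ c j))
        = w c * ∏ j ∈ Finset.univ \ {i₀}, w (T j) := by
      calc (∏ j, w (Function.update T i₀ c j))
          = ∏ j, Function.update (fun j => w (T j)) i₀ (w c) j := by rw [hupd]
        _ = w c * ∏ j ∈ Finset.univ \ {i₀}, w (T j) :=
            Finset.prod_update_of_mem (Finset.mem_univ i₀) _ _
    have hprod2 : (∏ j, w (T j)) = w (T i₀) * ∏ j ∈ Finset.univ \ {i₀}, w (T j) := by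
      rw [← Finset.erase_eq]
      exact (Finset.mul_prod_erase _ _ (Finset.mem_univ i₀)).symm
    rw [Function.update_self, hΦ, hprod, hprod2]
    ring
  have hIto : ∑ p : β × (ι → β), G p
      = ∑ T : ι → β, (∏ j, w (T j)) * Φ T (T i₀) := by
    rw [Fintype.sum_prod_type, Finset.sum_comm]
    rw [show ∑ T : ι → β, ∑ c : β, G (c, T)
        = ∑ T : ι → β, (∑ c : β, w c) * ((∏ j, w (T j)) * Φ T (T i₀)) from
      Finset.sum_congr rfl fun T _ => by rw [Finset.sum_mul]]
    simp [hw1]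
  have hIfrom : ∑ p : β × (ι → β), G ((hinv.toPerm _) p)
      = ∑ T : ι → β, (∏ j, w (T j)) * ∑ b, w b * Φ T b := by
    rw [Finset.sum_congr rfl fun p _ => hL p, Fintype.sum_prod_type, Finset.sum_comm]
    refine Finset.sum_congr rfl fun T _ => ?_
    rw [show (∑ x : β, (∏ j, w ((x, T).2 j)) * (w (x, T).1 * Φ (x, T).2 (x, T).1))
        = ∑ x : β, (∏ j, w (T j)) * (w x * Φ T x) from rfl, ← Finset.mul_sum]
  rw [← hIto, ← hsum, hIfrom]



lemma sum3_swap {α β γ : Type*} (sa : Finset α) (sb : Finset β) (sc : Finset γ)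
    (F : α → β → γ → ℝ) :
    ∑ a ∈ sa, ∑ b ∈ sb, ∑ c ∈ sc, F a b c
      = ∑ b ∈ sb, ∑ c ∈ sc, ∑ a ∈ sa, F a b c := by
  rw [Finset.sum_comm]
  exact Finset.sum_congr rfl fun b _ => Finset.sum_comm



lemma corr_gap {ι β E : Type*} [Fintype ι] [DecidableEq ι] [Fintype β] [DecidableEq E]
    (w : β → ℝ) (hw0 : ∀ b, 0 ≤ w b) (hw1 : ∑ b, w b = 1)
    (y : β → ι → E) (f : Finset E → ℝ) (hf0 : ∀ X, 0 ≤ f X)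
    (hmono : MonotoneFn f) (hsub : SubmodularFn f) :
    (1 - (Real.exp 1)⁻¹) * (∑ b, w b * f (univ.image (y b)))
      ≤ ∑ T : ι → β, (∏ i, w (T i)) * f (univ.image fun i => y (T i) i) := by
  classical
  set c : ℝ := ∑ b, w b * f (univ.image (y b)) with hc
  set W : (ι → β) → ℝ := fun T => ∏ i, w (T i) with hW
  set X : (ι → β) → Finset ι → Finset E := fun T R => R.image fun i => y (T i) i with hX
  set gT : (ι → β) → Finset ι → ℝ := fun T R => f (X T R) with hgT
  set m : (ι → β) → Finset ι → β → ι → ℝ :=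
    fun T R b i => f (insert (y b i) (X T R)) - f (X T R) with hm
  set F : ℝ → ℝ := fun u => ∑ T : ι → β, W T * P univ (gT T) u with hFdef
  set F' : ℝ → ℝ := fun u => ∑ T : ι → β, W T * DP univ (gT T) u with hF'def
  have hW0 : ∀ T, 0 ≤ W T := fun T => Finset.prod_nonneg fun i _ => hw0 (T i)
  have hW1 : ∑ T : ι → β, W T = 1 := sum_prod_pi_eq_one (fun _ => w) (fun _ => hw1)
  have hDF : ∀ u, HasDerivAt F (F' u) u := fun u =>
    HasDerivAt.fun_sum fun T _ => ((hasDerivAt_P univ (gT T) u).const_mul (W T))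
  -- the key differential inequality
  have hkey : ∀ u, 0 ≤ u → u ≤ 1 → c - F u ≤ F' u := by
    intro u hu0 hu1
    have h1u : (0:ℝ) ≤ 1 - u := by linarith
    have hccsum : ∑ R ∈ (univ : Finset ι).powerset,
        u ^ R.card * (1 - u) ^ ((univ : Finset ι).card - R.card) = 1 := by
      have h := P_const (univ : Finset ι) u
      unfold P at h
      simpa using h
    -- pointwise bound
    have hpt : ∀ (T : ι → β) (R : Finset ι),
        c - gT T R ≤ ∑ b, w b * ∑ i, m T (R.erase i) b i := by
      intro T R
      have h0 : c - gT T R = ∑ b, w b * (f (univ.image (y b)) - gT T R) := by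
        rw [hc]
        have : ∑ b, w b * (f (univ.image (y b)) - gT T R)
            = (∑ b, w b * f (univ.image (y b))) - (∑ b, w b) * gT T R := by
          rw [Finset.sum_mul, ← Finset.sum_sub_distrib]
          exact Finset.sum_congr rfl fun b _ => by ring
        rw [this, hw1, one_mul]
      rw [h0]
      refine Finset.sum_le_sum fun b _ => mul_le_mul_of_nonneg_left ?_ (hw0 b)
      calc f (univ.image (y b)) - gT T R
          ≤ f (X T R ∪ univ.image (y b)) - f (X T R) :=
            sub_le_sub_right (hmono Finset.subset_union_right) _
        _ ≤ ∑ i, (f (insert (y b i) (X T R)) - f (X T R)) :=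
            telescope hmono hsub (X T R) (y b) univ
        _ ≤ ∑ i, m T (R.erase i) b i := by
            refine Finset.sum_le_sum fun i _ => ?_
            exact marg_anti hmono hsub
              (Finset.image_subset_image (Finset.erase_subset i R)) (y b i)
    -- step B : express c - F u
    have hB : c - F u = ∑ T : ι → β, W T * ∑ R ∈ (univ : Finset ι).powerset,
        u ^ R.card * (1 - u) ^ ((univ : Finset ι).card - R.card) * (c - gT T R) := by
      have inner : ∀ T : ι → β, ∑ R ∈ (univ : Finset ι).powerset,
          u ^ R.card * (1 - u) ^ ((univ : Finset ι).card - R.card) * (c - gT T R)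
          = c - P univ (gT T) u := by
        intro T
        have : ∑ R ∈ (univ : Finset ι).powerset,
            u ^ R.card * (1 - u) ^ ((univ : Finset ι).card - R.card) * (c - gT T R)
            = (∑ R ∈ (univ : Finset ι).powerset,
                u ^ R.card * (1 - u) ^ ((univ : Finset ι).card - R.card)) * c - P univ (gT T) u := by
          unfold P
          rw [Finset.sum_mul, ← Finset.sum_sub_distrib]
          exact Finset.sum_congr rfl fun R _ => by ring
        rw [this, hccsum, one_mul]
      rw [Finset.sum_congr rfl fun T _ => by rw [inner T]]
      have : ∑ T : ι → β, W T * (c - P univ (gT T) u)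
          = (∑ T : ι → β, W T) * c - F u := by
        rw [hFdef, Finset.sum_mul, ← Finset.sum_sub_distrib]
        exact Finset.sum_congr rfl fun T _ => by ring
      rw [this, hW1, one_mul]
    -- step C : the inequality with erased sets
    have hC : c - F u ≤ ∑ T : ι → β, W T * ∑ R ∈ (univ : Finset ι).powerset,
        u ^ R.card * (1 - u) ^ ((univ : Finset ι).card - R.card)
          * (∑ b, w b * ∑ i, m T (R.erase i) b i) := by
      rw [hB]
      refine Finset.sum_le_sum fun T _ => mul_le_mul_of_nonneg_left ?_ (hW0 T)
      refine Finset.sum_le_sum fun R _ => mul_le_mul_of_nonneg_left (hpt T R) ?_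
      exact mul_nonneg (pow_nonneg hu0 _) (pow_nonneg h1u _)
    refine le_trans hC (le_of_eq ?_)
    have hstep1 : ∀ T : ι → β,
        ∑ R ∈ (univ : Finset ι).powerset,
          u ^ R.card * (1 - u) ^ ((univ : Finset ι).card - R.card)
            * (∑ b, w b * ∑ i, m T (R.erase i) b i)
        = ∑ b, w b * ∑ i, ∑ R ∈ (univ : Finset ι).powerset,
            u ^ R.card * (1 - u) ^ ((univ : Finset ι).card - R.card)
              * m T (R.erase i) b i := by
      intro T
      simp only [Finset.mul_sum]
      rw [sum3_swap]
      exact Finset.sum_congr rfl fun b _ => Finset.sum_congr rfl fun i _ =>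
        Finset.sum_congr rfl fun R _ => by ring
    have hstep2 : ∀ (T : ι → β) (b : β) (i : ι),
        ∑ R ∈ (univ : Finset ι).powerset,
          u ^ R.card * (1 - u) ^ ((univ : Finset ι).card - R.card) * m T (R.erase i) b i
        = ∑ R ∈ ((univ : Finset ι).erase i).powerset,
            u ^ R.card * (1 - u) ^ ((univ : Finset ι).card - 1 - R.card) * m T R b i :=
      fun T b i => rdrop (Finset.mem_univ i) (fun R => m T R b i) u
    have hsplit : ∀ i : ι,
        (∑ T : ι → β, W T * ∑ b, w b * ∑ R ∈ ((univ : Finset ι).erase i).powerset,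
            u ^ R.card * (1 - u) ^ ((univ : Finset ι).card - 1 - R.card) * m T R b i)
        = ∑ T : ι → β, W T * ∑ R ∈ ((univ : Finset ι).erase i).powerset,
            u ^ R.card * (1 - u) ^ ((univ : Finset ι).card - 1 - R.card) * m T R (T i) i := by
      intro i
      have hPhi : ∀ (T : ι → β) (cv b : β),
          (∑ R ∈ ((univ : Finset ι).erase i).powerset,
            u ^ R.card * (1 - u) ^ ((univ : Finset ι).card - 1 - R.card)
              * m (Function.update T i cv) R b i)
          = ∑ R ∈ ((univ : Finset ι).erase i).powerset,
            u ^ R.card * (1 - u) ^ ((univ : Finset ι).card - 1 - R.card) * m T R b i := by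
        intro T cv b
        refine Finset.sum_congr rfl fun R hR => ?_
        have hRs : R ⊆ (univ : Finset ι).erase i := Finset.mem_powerset.1 hR
        have hXeq : X (Function.update T i cv) R = X T R := by
          simp only [hX]
          refine Finset.image_congr fun j hj => ?_
          have hji : j ≠ i := (Finset.mem_erase.1 (hRs hj)).1
          rw [Function.update_of_ne hji]
        simp only [hm, hXeq]
      have h := split w hw1 i
        (fun T b => ∑ R ∈ ((univ : Finset ι).erase i).powerset,
          u ^ R.card * (1 - u) ^ ((univ : Finset ι).card - 1 - R.card) * m T R b i)
        hPhi
      simp only [hW]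
      exact h.symm
    have hF'eq : F' u = ∑ i, ∑ T : ι → β, W T *
        ∑ R ∈ ((univ : Finset ι).erase i).powerset,
          u ^ R.card * (1 - u) ^ ((univ : Finset ι).card - 1 - R.card) * m T R (T i) i := by
      show (∑ T : ι → β, W T * DP univ (gT T) u) = _
      unfold DP
      simp only [Finset.mul_sum]
      rw [Finset.sum_comm]
      refine Finset.sum_congr rfl fun i _ => Finset.sum_congr rfl fun T _ =>
        Finset.sum_congr rfl fun R _ => ?_
      simp only [hm, hgT, hX, Finset.image_insert]
    calc ∑ T : ι → β, W T * ∑ R ∈ (univ : Finset ι).powerset,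
          u ^ R.card * (1 - u) ^ ((univ : Finset ι).card - R.card)
            * (∑ b, w b * ∑ i, m T (R.erase i) b i)
        = ∑ T : ι → β, W T * ∑ b, w b * ∑ i,
            ∑ R ∈ ((univ : Finset ι).erase i).powerset,
              u ^ R.card * (1 - u) ^ ((univ : Finset ι).card - 1 - R.card)
                * m T R b i := by
          refine Finset.sum_congr rfl fun T _ => ?_
          rw [hstep1 T]
          congr 1
          refine Finset.sum_congr rfl fun b _ => ?_
          congr 1
          exact Finset.sum_congr rfl fun i _ => hstep2 T b i
      _ = ∑ i, ∑ T : ι → β, W T * ∑ b, w b *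
            ∑ R ∈ ((univ : Finset ι).erase i).powerset,
              u ^ R.card * (1 - u) ^ ((univ : Finset ι).card - 1 - R.card)
                * m T R b i := by
          simp only [Finset.mul_sum]
          rw [sum3_swap, sum3_swap]
      _ = ∑ i, ∑ T : ι → β, W T *
            ∑ R ∈ ((univ : Finset ι).erase i).powerset,
              u ^ R.card * (1 - u) ^ ((univ : Finset ι).card - 1 - R.card)
                * m T R (T i) i :=
          Finset.sum_congr rfl fun i _ => hsplit i
      _ = F' u := (hF'eq).symm
  -- Gronwall argument
  set H : ℝ → ℝ := fun v => Real.exp v * (F v - c) with hH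
  have hderivH : ∀ v, HasDerivAt H (Real.exp v * (F v - c) + Real.exp v * F' v) v := by
    intro v
    exact (Real.hasDerivAt_exp v).mul ((hDF v).sub_const c)
  have hHdiff : Differentiable ℝ H := fun v => (hderivH v).differentiableAt
  have hmonoH : MonotoneOn H (Set.Icc (0:ℝ) 1) := by
    refine monotoneOn_of_deriv_nonneg (convex_Icc 0 1) hHdiff.continuous.continuousOn
      hHdiff.differentiableOn ?_
    intro x hx
    rw [interior_Icc] at hx
    rw [(hderivH x).deriv]
    have hk := hkey x (le_of_lt hx.1) (le_of_lt hx.2)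
    nlinarith [Real.exp_pos x]
  have hH01 : H 0 ≤ H 1 :=
    hmonoH (Set.left_mem_Icc.2 zero_le_one) (Set.right_mem_Icc.2 zero_le_one) zero_le_one
  have hF0 : F 0 = f ∅ := by
    show ∑ T : ι → β, W T * P univ (gT T) 0 = f ∅
    have h2 : ∀ T : ι → β, W T * P univ (gT T) 0 = W T * f ∅ := by
      intro T
      rw [P_zero, show gT T ∅ = f ∅ from by simp [hgT, hX]]
    rw [Finset.sum_congr rfl fun T _ => h2 T, ← Finset.sum_mul, hW1, one_mul]
  have hF1 : F 1 = ∑ T : ι → β, W T * f (univ.image fun i => y (T i) i) := by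
    show ∑ T : ι → β, W T * P univ (gT T) 1 = _
    refine Finset.sum_congr rfl fun T _ => ?_
    rw [P_one]
  have h0 : H 0 = f ∅ - c := by rw [hH]; simp [hF0]
  have h1 : H 1 = Real.exp 1 * (F 1 - c) := rfl
  rw [h0, h1] at hH01
  have hE : (0:ℝ) < Real.exp 1 := Real.exp_pos 1
  have hEinv : Real.exp 1 * (Real.exp 1)⁻¹ = 1 := mul_inv_cancel₀ (ne_of_gt hE)
  have hexp : Real.exp 1 * (F 1 - c) = Real.exp 1 * F 1 - Real.exp 1 * c := by ring
  rw [hexp] at hH01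
  have hmain : Real.exp 1 * ((1 - (Real.exp 1)⁻¹) * c) ≤ Real.exp 1 * F 1 := by
    have he : Real.exp 1 * ((1 - (Real.exp 1)⁻¹) * c) = Real.exp 1 * c - c := by
      rw [← mul_assoc, mul_sub, mul_one, hEinv]; ring
    rw [he]
    linarith [hf0 ∅]
  have hfin : (1 - (Real.exp 1)⁻¹) * c ≤ F 1 := le_of_mul_le_mul_left hmain hE
  exact hF1 ▸ hfin


end CorrGapAux
end CorrGapProofs

open CorrGapAux

/-- In any Bayesian game with submodular social welfare whose prior is
independent (a product distribution), `STR ≥ (1 − 1/e) · OPT`: the strategy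
representability gap is at least `1 − 1/e`. -/
theorem str_ge_one_sub_inv_e_mul_opt_of_independent
    {n : ℕ} {Θ : Fin n → Type*} [∀ i, Fintype (Θ i)] [∀ i, DecidableEq (Θ i)]
    [∀ i, Nonempty (Θ i)]
    {E : Type*} [Fintype E] [DecidableEq E]
    (Act : ∀ i, Θ i → Finset E) (hAne : ∀ i t, (Act i t).Nonempty)
    (hdisj : ∀ p q : Σ i : Fin n, Θ i, p ≠ q → Disjoint (Act p.1 p.2) (Act q.1 q.2))
    (ρ : (∀ i, Θ i) → ℝ) (hρ0 : ∀ θ, 0 ≤ ρ θ) (hρ1 : ∑ θ, ρ θ = 1)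
    (ρi : ∀ i, Θ i → ℝ) (hρi0 : ∀ i t, 0 ≤ ρi i t) (hρi1 : ∀ i, ∑ t, ρi i t = 1)
    (hprod : ∀ θ, ρ θ = ∏ i, ρi i (θ i))
    (f : Finset E → ℝ) (hf0 : ∀ X, 0 ≤ f X)
    (hmono : MonotoneFn f) (hsub : SubmodularFn f) :
    (1 - (Real.exp 1)⁻¹) * gOPT Act hAne ρ f ≤ gSTR Act hAne ρ f := by
  classical
  have hne : ∀ θ : ∀ i, Θ i, (Fintype.piFinset fun i => Act i (θ i)).Nonempty :=
    fun θ => Fintype.piFinset_nonempty.mpr fun i => hAne i (θ i)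
  choose A hA1 hA2 using fun θ : (∀ i, Θ i) =>
    Finset.exists_mem_eq_sup' (hne θ) (fun a : ∀ _ : Fin n, E => f (Finset.univ.image a))
  -- rewrite gOPT using the chosen optimizers
  have hOPT : gOPT Act hAne ρ f = ∑ θ : ∀ i, Θ i, ρ θ * f (Finset.univ.image (A θ)) := by
    unfold gOPT
    refine Finset.sum_congr rfl fun θ _ => ?_
    congr 1
    exact hA2 θ
  -- core correlation gap bound
  have core : (1 - (Real.exp 1)⁻¹) *
        (∑ θ : ∀ i, Θ i, ρ θ * f (Finset.univ.image (A θ)))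
      ≤ ∑ T : Fin n → (∀ j, Θ j), (∏ i, ρ (T i)) *
          f (Finset.univ.image fun i => A (T i) i) :=
    corr_gap ρ hρ0 hρ1 (fun θ i => A θ i) f hf0 hmono hsub
  -- the randomized strategies induced by resampling
  have hmem : ∀ τ : Fin n → (∀ j, Θ j),
      (fun i (t : Θ i) => A (Function.update (τ i) i t) i)
        ∈ Fintype.piFinset (fun i => Fintype.piFinset fun t : Θ i => Act i t) := by
    intro τ
    rw [Fintype.mem_piFinset]
    intro i
    rw [Fintype.mem_piFinset]
    intro t
    have h := (Fintype.mem_piFinset.mp (hA1 (Function.update (τ i) i t))) i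
    rwa [Function.update_self] at h
  have hle : ∀ τ : Fin n → (∀ j, Θ j),
      (∑ θ : ∀ i, Θ i, ρ θ *
        f (Finset.univ.image fun i => A (Function.update (τ i) i (θ i)) i))
        ≤ gSTR Act hAne ρ f := by
    intro τ
    exact Finset.le_sup'
      (fun s : ∀ i, Θ i → E => ∑ θ : ∀ i, Θ i, ρ θ *
        f (Finset.univ.image fun i => s i (θ i))) (hmem τ)
  have havg : ∑ τ : Fin n → (∀ j, Θ j), (∏ i, ρ (τ i)) *
      (∑ θ : ∀ i, Θ i, ρ θ *
        f (Finset.univ.image fun i => A (Function.update (τ i) i (θ i)) i))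
      ≤ gSTR Act hAne ρ f :=
    avg_le _ _ _ (fun τ => Finset.prod_nonneg fun i _ => hρ0 (τ i))
      (sum_prod_pi_eq_one (fun _ => ρ) (fun _ => hρ1)) hle
  -- change of variables
  have hchange : (∑ T : Fin n → (∀ j, Θ j), (∏ i, ρ (T i)) *
        f (Finset.univ.image fun i => A (T i) i))
      = ∑ τ : Fin n → (∀ j, Θ j), (∏ i, ρ (τ i)) *
          (∑ θ : ∀ i, Θ i, ρ θ *
            f (Finset.univ.image fun i => A (Function.update (τ i) i (θ i)) i)) := by
    have hinv : Function.Involutive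
        (fun p : (Fin n → (∀ j, Θ j)) × (∀ j, Θ j) =>
          ((fun i => Function.update (p.1 i) i (p.2 i)), fun i => p.1 i i)) := by
      rintro ⟨T, x⟩
      refine Prod.ext ?_ ?_
      · funext i
        simp [Function.update_idem, Function.update_self, Function.update_eq_self]
      · funext i
        simp
    set G : (Fin n → (∀ j, Θ j)) × (∀ j, Θ j) → ℝ :=
      fun p => (∏ i, ρ (p.1 i)) * (ρ p.2 *
        f (Finset.univ.image fun i => A (Function.update (p.1 i) i (p.2 i)) i)) with hG
    have hsum := Equiv.sum_comp (hinv.toPerm _) G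
    -- evaluate G on the involution
    have hL : ∀ p : (Fin n → (∀ j, Θ j)) × (∀ j, Θ j),
        G ((hinv.toPerm _) p)
        = ((∏ i, ρ (p.1 i)) * ∏ i, ρi i (p.2 i)) *
            f (Finset.univ.image fun i => A (p.1 i) i) := by
      rintro ⟨T, x⟩
      show (∏ i, ρ (Function.update (T i) i (x i))) * (ρ (fun i => T i i) *
          f (Finset.univ.image fun i =>
            A (Function.update (Function.update (T i) i (x i)) i (T i i)) i))
        = ((∏ i, ρ (T i)) * ∏ i, ρi i (x i)) *
            f (Finset.univ.image fun i => A (T i) i)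
      have hAeq : (fun i => A (Function.update (Function.update (T i) i (x i)) i (T i i)) i)
          = fun i => A (T i) i := by
        funext i
        rw [Function.update_idem, Function.update_eq_self]
      rw [hAeq]
      have e1 : ∀ i, ρ (Function.update (T i) i (x i))
          = ρi i (x i) * ∏ j ∈ Finset.univ.erase i, ρi j (T i j) := by
        intro i
        rw [hprod, ← Finset.mul_prod_erase Finset.univ _ (Finset.mem_univ i)]
        congr 1
        · rw [Function.update_self]
        · refine Finset.prod_congr rfl fun j hj => ?_
          rw [Function.update_of_ne (Finset.mem_erase.1 hj).1]
      have e2 : ∀ i, ρ (T i)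
          = ρi i (T i i) * ∏ j ∈ Finset.univ.erase i, ρi j (T i j) := by
        intro i
        rw [hprod, ← Finset.mul_prod_erase Finset.univ _ (Finset.mem_univ i)]
      have e3 : ρ (fun i => T i i) = ∏ i, ρi i (T i i) := hprod _
      rw [Finset.prod_congr rfl fun i _ => e1 i, Finset.prod_congr rfl fun i _ => e2 i, e3,
        Finset.prod_mul_distrib, Finset.prod_mul_distrib]
      ring
    -- sum over pairs equals RHS
    have hR : ∑ p : (Fin n → (∀ j, Θ j)) × (∀ j, Θ j), G p
        = ∑ τ : Fin n → (∀ j, Θ j), (∏ i, ρ (τ i)) *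
            (∑ θ : ∀ i, Θ i, ρ θ *
              f (Finset.univ.image fun i => A (Function.update (τ i) i (θ i)) i)) := by
      rw [Fintype.sum_prod_type]
      refine Finset.sum_congr rfl fun τ _ => ?_
      rw [Finset.mul_sum]
    -- sum over pairs of the composed function equals LHS
    have hLsum : ∑ p : (Fin n → (∀ j, Θ j)) × (∀ j, Θ j), G ((hinv.toPerm _) p)
        = ∑ T : Fin n → (∀ j, Θ j), (∏ i, ρ (T i)) *
            f (Finset.univ.image fun i => A (T i) i) := by
      rw [Finset.sum_congr rfl fun p _ => hL p, Fintype.sum_prod_type]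
      refine Finset.sum_congr rfl fun T _ => ?_
      rw [show (∑ x : ∀ j, Θ j, ((∏ i, ρ ((T, x).1 i)) * ∏ i, ρi i ((T, x).2 i)) *
          f (Finset.univ.image fun i => A ((T, x).1 i) i))
        = ∑ x : ∀ j, Θ j, ((∏ i, ρ (T i)) *
            f (Finset.univ.image fun i => A (T i) i)) * ∏ i, ρi i (x i) from
        Finset.sum_congr rfl fun x _ => by ring, ← Finset.mul_sum,
        sum_prod_pi_eq_one ρi hρi1, mul_one]
    rw [← hLsum, hsum, hR]
  calc (1 - (Real.exp 1)⁻¹) * gOPT Act hAne ρ f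
      = (1 - (Real.exp 1)⁻¹) * ∑ θ : ∀ i, Θ i, ρ θ * f (Finset.univ.image (A θ)) := by
        rw [hOPT]
    _ ≤ ∑ T : Fin n → (∀ j, Θ j), (∏ i, ρ (T i)) *
          f (Finset.univ.image fun i => A (T i) i) := core
    _ = ∑ τ : Fin n → (∀ j, Θ j), (∏ i, ρ (τ i)) *
          (∑ θ : ∀ i, Θ i, ρ θ *
            f (Finset.univ.image fun i => A (Function.update (τ i) i (θ i)) i)) := hchange
    _ ≤ gSTR Act hAne ρ f := havg
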